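/- Let t ≥ 1 and let G be a graph such that there exist initial sets P_a^0 and P_b^0 for which the two-opinion activation process in G takes at least t rounds, i.e., P_a^t ∪ P_b^t ≠ P_a^{t-1} ∪ P_b^{t-1}. Then the treedepth of G is at least log_3(t+2). -/

import Mathlib

open scoped Classical

variable {V : Type*}

/-- Reachability within a vertex subset `s` of `G` (walks staying inside `s`). -/
def reachIn (G : SimpleGraph V) (s : Finset V) (x y : V) : Prop :=
  Relation.ReflTransGen (fun a b => a ∈ s ∧ b ∈ s ∧ G.Adj a b) x y

/-- The induced subgraph of `G` on `s` is connected. -/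
def connOn (G : SimpleGraph V) (s : Finset V) : Prop :=
  ∀ x ∈ s, ∀ y ∈ s, reachIn G s x y

/-- The connected component of `v` in the induced subgraph of `G` on `s`. -/
noncomputable def compOf [DecidableEq V] (G : SimpleGraph V) (s : Finset V) (v : V) : Finset V :=
  s.filter (fun u => reachIn G s v u)

/-- Fueled recursive definition of treedepth of the induced subgraph on `s`. -/
noncomputable def tdAux [DecidableEq V] (G : SimpleGraph V) : ℕ → Finset V → ℕ
  | 0, s => s.card
  | n + 1, s =>
    if h : s.card ≤ 1 then s.card
    else if connOn G s then
      1 + s.inf' (Finset.card_pos.mp (by omega)) (fun v => tdAux G n (s.erase v))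
    else
      s.sup (fun v => tdAux G n (compOf G s v))

/-- Treedepth of the induced subgraph of `G` on `s`. -/
noncomputable def tdOn [DecidableEq V] (G : SimpleGraph V) (s : Finset V) : ℕ :=
  tdAux G s.card s

/-- Treedepth of a finite graph `G`. -/
noncomputable def treedepth [Fintype V] [DecidableEq V] (G : SimpleGraph V) : ℕ :=
  tdOn G Finset.univ

open scoped Classical

variable {V : Type*}

/-- Number of neighbors of `v` that lie in `s`. -/
noncomputable def nbrCount [Fintype V] (G : SimpleGraph V) (s : Finset V) (v : V) : ℕ :=
  (s.filter fun u => G.Adj v u).card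

/-- One update step for one opinion: `Pc` is the set holding this opinion,
`Pnc` the set holding the other opinion. -/
noncomputable def updOp [Fintype V] (G : SimpleGraph V) (f1 f2 : V → ℕ)
    (Pc Pnc : Finset V) : Finset V :=
  Pc ∪ Finset.univ.filter (fun v =>
    (v ∉ Pc ∧ v ∉ Pnc ∧ f1 v ≤ nbrCount G Pc v) ∨ (v ∈ Pnc ∧ f2 v ≤ nbrCount G Pc v))

/-- The two-opinion activation process: `(proc2 G f1 f2 Pa0 Pb0 i).1` is `P_a^i`
and `.2` is `P_b^i`. -/
noncomputable def proc2 [Fintype V] (G : SimpleGraph V) (f1 f2 : V → ℕ)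
    (Pa0 Pb0 : Finset V) : ℕ → Finset V × Finset V
  | 0 => (Pa0, Pb0)
  | n + 1 =>
    let p := proc2 G f1 f2 Pa0 Pb0 n
    (updOp G f1 f2 p.1 p.2, updOp G f1 f2 p.2 p.1)

/-- Selector for an opinion: `true` is opinion `a`, `false` is opinion `b`. -/
noncomputable def procSel [Fintype V] (G : SimpleGraph V) (f1 f2 : V → ℕ)
    (Pa0 Pb0 : Finset V) (c : Bool) (i : ℕ) : Finset V :=
  if c then (proc2 G f1 f2 Pa0 Pb0 i).1 else (proc2 G f1 f2 Pa0 Pb0 i).2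

/-- The single-opinion target set activation process. -/
noncomputable def sproc [Fintype V] (G : SimpleGraph V) (f : V → ℕ)
    (T : Finset V) : ℕ → Finset V
  | 0 => T
  | n + 1 =>
    let P := sproc G f T n
    P ∪ Finset.univ.filter (fun v => v ∉ P ∧ f v ≤ nbrCount G P v)
section TD
variable {V : Type*} [DecidableEq V] {G : SimpleGraph V}

lemma reachIn_symm {s : Finset V} {x y : V} (h : reachIn G s x y) : reachIn G s y x := by
  refine (@Relation.ReflTransGen.stdSymm _ _ ⟨?_⟩).symm _ _ h
  rintro a b ⟨ha, hb, hab⟩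
  exact ⟨hb, ha, hab.symm⟩

lemma compOf_subset (s : Finset V) (v : V) : compOf G s v ⊆ s := Finset.filter_subset _ _

lemma mem_compOf {s : Finset V} {v u : V} : u ∈ compOf G s v ↔ u ∈ s ∧ reachIn G s v u := by
  simp [compOf]

lemma mem_compOf_self {s : Finset V} {v : V} (hv : v ∈ s) : v ∈ compOf G s v :=
  mem_compOf.2 ⟨hv, Relation.ReflTransGen.refl⟩

lemma compOf_card_lt {s : Finset V} {v : V} (hv : v ∈ s) (hc : ¬ connOn G s) :
    (compOf G s v).card < s.card := by
  apply Finset.card_lt_card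
  refine ⟨compOf_subset s v, ?_⟩
  intro hsub
  apply hc
  intro x hx y hy
  have hx' : reachIn G s v x := (mem_compOf.1 (hsub hx)).2
  have hy' : reachIn G s v y := (mem_compOf.1 (hsub hy)).2
  exact (reachIn_symm hx').trans hy'

lemma tdAux_fuel (G : SimpleGraph V) : ∀ (n : ℕ) (s : Finset V), s.card ≤ n →
    tdAux G (n + 1) s = tdAux G n s := by
  intro n
  induction n with
  | zero =>
    intro s hs
    have : s = ∅ := Finset.card_eq_zero.1 (Nat.le_zero.1 hs)
    subst this
    simp [tdAux]
  | succ n ih =>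
    intro s hs
    rw [tdAux, tdAux]
    by_cases h1 : s.card ≤ 1
    · simp [h1]
    · rw [dif_neg h1, dif_neg h1]
      by_cases hc : connOn G s
      · rw [if_pos hc, if_pos hc]
        congr 1
        refine Finset.inf'_congr _ rfl ?_
        intro v hv
        exact ih (s.erase v) (by rw [Finset.card_erase_of_mem hv]; omega)
      · rw [if_neg hc, if_neg hc]
        refine Finset.sup_congr rfl ?_
        intro v hv
        exact ih (compOf G s v) (by have := compOf_card_lt hv hc; omega)

lemma tdAux_eq_tdOn (G : SimpleGraph V) {n : ℕ} {s : Finset V} (h : s.card ≤ n) :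
    tdAux G n s = tdOn G s := by
  induction n with
  | zero => rw [tdOn, Nat.le_zero.1 h]
  | succ n ih =>
    rcases Nat.lt_or_ge s.card (n+1) with h' | h'
    · rw [tdAux_fuel G n s (by omega), ih (by omega)]
    · have : s.card = n + 1 := le_antisymm h h'
      rw [tdOn, this]

lemma tdOn_pos {s : Finset V} (hs : s.Nonempty) : 1 ≤ tdOn G s := by
  have key : ∀ (n : ℕ) (u : Finset V), u.Nonempty → 1 ≤ tdAux G n u := by
    intro n
    induction n with
    | zero => intro u hu; simpa [tdAux, Finset.card_pos] using hu
    | succ n ih =>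
      intro u hu
      rw [tdAux]
      by_cases h1 : u.card ≤ 1
      · simpa [h1, Finset.card_pos] using hu
      · rw [dif_neg h1]
        by_cases hc : connOn G u
        · rw [if_pos hc]; omega
        · rw [if_neg hc]
          obtain ⟨v, hv⟩ := hu
          calc 1 ≤ tdAux G n (compOf G u v) := ih _ ⟨v, mem_compOf_self hv⟩
            _ ≤ _ := Finset.le_sup (f := fun v => tdAux G n (compOf G u v)) hv
  exact key _ _ hs

lemma tdOn_conn {s : Finset V} (h1 : 1 < s.card) (hc : connOn G s) :
    ∃ v ∈ s, tdOn G s = 1 + tdOn G (s.erase v) := by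
  have hne : s.Nonempty := Finset.card_pos.1 (by omega)
  obtain ⟨m, hm⟩ : ∃ m, s.card = m + 1 := ⟨s.card - 1, by omega⟩
  have : tdOn G s = 1 + s.inf' hne (fun v => tdAux G m (s.erase v)) := by
    rw [tdOn, hm, tdAux, dif_neg (by omega), if_pos hc]
  obtain ⟨v, hv, heq⟩ := Finset.exists_mem_eq_inf' hne (fun v => tdAux G m (s.erase v))
  refine ⟨v, hv, ?_⟩
  rw [this, heq, tdAux_eq_tdOn G (by rw [Finset.card_erase_of_mem hv]; omega)]

lemma tdOn_notconn {s : Finset V} (h1 : 1 < s.card) (hc : ¬ connOn G s) :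
    ∀ v ∈ s, tdOn G (compOf G s v) ≤ tdOn G s := by
  intro v hv
  obtain ⟨m, hm⟩ : ∃ m, s.card = m + 1 := ⟨s.card - 1, by omega⟩
  have : tdOn G s = s.sup (fun v => tdAux G m (compOf G s v)) := by
    rw [tdOn, hm, tdAux, dif_neg (by omega), if_neg hc]
  rw [this]
  calc tdOn G (compOf G s v) = tdAux G m (compOf G s v) :=
        (tdAux_eq_tdOn G (by have := compOf_card_lt hv hc; omega)).symm
    _ ≤ _ := Finset.le_sup (f := fun v => tdAux G m (compOf G s v)) hv

lemma tdOn_of_card_le_one {s : Finset V} (h : s.card ≤ 1) : tdOn G s = s.card := by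
  rw [tdOn]
  interval_cases h' : s.card
  · rw [tdAux, h']
  · rw [tdAux]; simp [h']

end TD
section Walk
variable {V : Type*} [DecidableEq V] {G : SimpleGraph V}

/-- Walk step relation: stay put or move along an edge inside `s`. -/
def stepRel (G : SimpleGraph V) (s : Finset V) (a b : V) : Prop :=
  a = b ∨ (a ∈ s ∧ b ∈ s ∧ G.Adj a b)

lemma chain'_mono_mem {α : Type*} {R R' : α → α → Prop} {l : List α}
    (h : ∀ a ∈ l, ∀ b ∈ l, R a b → R' a b) (hc : List.Chain' R l) : List.Chain' R' l := by
  unfold List.Chain' at hc ⊢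
  rw [List.isChain_iff_getElem] at hc ⊢
  intro i hi
  exact h _ (List.getElem_mem _) _ (List.getElem_mem _) (hc i hi)

lemma stepRel_reach {s : Finset V} {a b : V} (h : stepRel G s a b) : reachIn G s a b := by
  rcases h with rfl | h
  · exact Relation.ReflTransGen.refl
  · exact Relation.ReflTransGen.single h

lemma chain_reach {s : Finset V} : ∀ (l : List V) (x : V),
    List.Chain' (stepRel G s) (x :: l) → ∀ y ∈ x :: l, reachIn G s x y := by
  intro l
  induction l with
  | nil =>
    intro x _ y hy
    rw [List.mem_singleton] at hy
    subst hy; exact Relation.ReflTransGen.refl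
  | cons a l ih =>
    intro x hch y hy
    unfold List.Chain' at hch
    rw [List.isChain_cons_cons] at hch
    rcases List.mem_cons.1 hy with rfl | hy'
    · exact Relation.ReflTransGen.refl
    · exact (stepRel_reach hch.1).trans (ih a hch.2 y hy')

/-- Splitting a list at the occurrences of `v`: some `v`-free contiguous piece is long. -/
lemma exists_split (v : V) : ∀ (n : ℕ) (l : List V), l.length ≤ n →
    ∃ p, p <:+: l ∧ v ∉ p ∧ l.length ≤ (l.count v + 1) * p.length + l.count v := by
  intro n
  induction n with
  | zero =>
    intro l hl
    have : l = [] := List.length_eq_zero_iff.1 (Nat.le_zero.1 hl)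
    subst this
    exact ⟨[], List.infix_rfl, by simp, by simp⟩
  | succ n ih =>
    intro l hl
    by_cases hv : v ∈ l
    · set q : V → Bool := fun x => decide (x ≠ v) with hq
      set tk := l.takeWhile q with htk
      set d := l.dropWhile q with hd
      have hld : tk ++ d = l := List.takeWhile_append_dropWhile (p := q)
      have hvtk : v ∉ tk := by
        intro hmem
        have := List.mem_takeWhile_imp hmem
        simp [hq] at this
      have hdne : d ≠ [] := by
        intro h0
        rw [h0, List.append_nil] at hld
        exact hvtk (hld ▸ hv)
      have hhead : d.head hdne = v := by
        have h := List.head_dropWhile_not q hdne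
        simp only [hq, ne_eq, Bool.not_eq_true, decide_eq_false_iff_not, not_not] at h
        exact h
      have hdd : d = v :: d.tail := by
        rw [← hhead]; exact (List.cons_head_tail hdne).symm
      set d' := d.tail with hd'
      have hll : l = tk ++ v :: d' := by rw [← hld, ← hdd]
      have hlen : l.length = tk.length + d'.length + 1 := by
        rw [hll]; simp; omega
      have hcnt_tk : tk.count v = 0 := List.count_eq_zero.2 hvtk
      have hcount : l.count v = d'.count v + 1 := by
        rw [hll, List.count_append, hcnt_tk, List.count_cons_self]
        omega
      have hd'len : d'.length ≤ n := by omega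
      obtain ⟨p', hp'inf, hp'v, hp'len⟩ := ih d' hd'len
      set c' := d'.count v with hc'
      set M := max tk.length p'.length with hM
      by_cases hcase : tk.length ≤ p'.length
      · refine ⟨p', ?_, hp'v, ?_⟩
        · exact (hp'inf.trans (List.tail_suffix d).isInfix).trans (List.dropWhile_suffix q).isInfix
        · rw [hcount, hlen]
          have h2 : (c' + 1) * p'.length + c' ≥ d'.length := hp'len
          nlinarith [hp'len, hcase]
      · push_neg at hcase
        refine ⟨tk, (List.takeWhile_prefix q).isInfix, hvtk, ?_⟩
        rw [hcount, hlen]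
        nlinarith [hp'len, hcase.le]
    · exact ⟨l, List.infix_rfl, hv, by rw [List.count_eq_zero.2 hv]; omega⟩

lemma exists_split_two {v : V} {l : List V} (h : l.count v ≤ 2) :
    ∃ p, p <:+: l ∧ v ∉ p ∧ l.length ≤ 3 * p.length + 2 := by
  obtain ⟨p, h1, h2, h3⟩ := exists_split v l.length l le_rfl
  refine ⟨p, h1, h2, ?_⟩
  have : (l.count v + 1) * p.length ≤ 3 * p.length :=
    Nat.mul_le_mul_right _ (by omega)
  omega

/-- Main abstract bound: a walk (with loops) inside `s` in which every vertex occurs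
at most twice has `length + 1 ≤ 3 ^ tdOn G s`. -/
lemma walk_bound (G : SimpleGraph V) : ∀ (n : ℕ) (s : Finset V), s.card ≤ n →
    ∀ l : List V, (∀ x ∈ l, x ∈ s) → List.Chain' (stepRel G s) l →
    (∀ v, l.count v ≤ 2) → l.length + 1 ≤ 3 ^ tdOn G s := by
  intro n
  induction n with
  | zero =>
    intro s hs l hmem _ _
    rcases l with _ | ⟨x, l0⟩
    · exact Nat.one_le_pow _ _ (by norm_num)
    · have : s = ∅ := Finset.card_eq_zero.1 (Nat.le_zero.1 hs)
      exact absurd (hmem x List.mem_cons_self) (by simp [this])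
  | succ n ih =>
    intro s hs l hmem hch hcnt
    rcases l with _ | ⟨x, l0⟩
    · exact Nat.one_le_pow _ _ (by norm_num)
    · set L := x :: l0 with hL
      have hx : x ∈ s := hmem x List.mem_cons_self
      have hsne : s.Nonempty := ⟨x, hx⟩
      by_cases h1 : s.card ≤ 1
      · have hall : ∀ b ∈ L, x = b := fun b hb =>
          Finset.card_le_one.1 h1 x hx b (hmem b hb)
        have : L.count x = L.length := List.count_eq_length.2 hall
        have hlen2 : L.length ≤ 2 := this ▸ hcnt x
        have : tdOn G s = 1 := by
          rw [tdOn_of_card_le_one h1]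
          have := Finset.card_pos.2 hsne; omega
        rw [this]; omega
      · push_neg at h1
        by_cases hc : connOn G s
        · obtain ⟨v0, hv0, htd⟩ := tdOn_conn h1 hc
          obtain ⟨p, hinf, hvp, hplen⟩ := exists_split_two (hcnt v0)
          have hpmem : ∀ y ∈ p, y ∈ s.erase v0 := fun y hy =>
            Finset.mem_erase.2 ⟨fun h => hvp (h ▸ hy), hmem y (hinf.sublist.subset hy)⟩
          have hpch : List.Chain' (stepRel G (s.erase v0)) p := by
            refine chain'_mono_mem ?_ (List.IsChain.infix hch hinf)
            intro a ha b hb hab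
            rcases hab with rfl | ⟨_, _, hadj⟩
            · exact Or.inl rfl
            · exact Or.inr ⟨hpmem a ha, hpmem b hb, hadj⟩
          have hpcnt : ∀ v, p.count v ≤ 2 := fun v =>
            (hinf.sublist.count_le v).trans (hcnt v)
          have hcard : (s.erase v0).card ≤ n := by
            rw [Finset.card_erase_of_mem hv0]; omega
          have hp := ih (s.erase v0) hcard p hpmem hpch hpcnt
          calc L.length + 1 ≤ 3 * (p.length + 1) := by omega
            _ ≤ 3 * 3 ^ tdOn G (s.erase v0) := Nat.mul_le_mul_left _ hp
            _ = 3 ^ (1 + tdOn G (s.erase v0)) := by rw [pow_add, pow_one]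
            _ = 3 ^ tdOn G s := by rw [htd]
        · set C := compOf G s x with hC
          have hreach : ∀ y ∈ L, reachIn G s x y := chain_reach l0 x hch
          have hmemC : ∀ y ∈ L, y ∈ C := fun y hy =>
            mem_compOf.2 ⟨hmem y hy, hreach y hy⟩
          have hchC : List.Chain' (stepRel G C) L := by
            refine chain'_mono_mem ?_ hch
            intro a ha b hb hab
            rcases hab with rfl | ⟨_, _, hadj⟩
            · exact Or.inl rfl
            · exact Or.inr ⟨hmemC a ha, hmemC b hb, hadj⟩
          have hcard : C.card ≤ n := by
            have : C.card < s.card := by rw [hC]; exact compOf_card_lt hx hc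
            omega
          calc L.length + 1 ≤ 3 ^ tdOn G C := ih C hcard L hmemC hchC hcnt
            _ ≤ 3 ^ tdOn G s :=
              Nat.pow_le_pow_right (by norm_num) (tdOn_notconn h1 hc x hx)

end Walk
section Proc
variable {V : Type*} [Fintype V] {G : SimpleGraph V} {f1 f2 : V → ℕ} {Pa0 Pb0 : Finset V}

lemma sel_succ (c : Bool) (i : ℕ) :
    procSel G f1 f2 Pa0 Pb0 c (i + 1) =
      updOp G f1 f2 (procSel G f1 f2 Pa0 Pb0 c i) (procSel G f1 f2 Pa0 Pb0 (!c) i) := by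
  cases c <;> simp [procSel, proc2]

lemma subset_updOp (Pc Pnc : Finset V) : Pc ⊆ updOp G f1 f2 Pc Pnc :=
  Finset.subset_union_left

lemma sel_mono (c : Bool) {i j : ℕ} (h : i ≤ j) :
    procSel G f1 f2 Pa0 Pb0 c i ⊆ procSel G f1 f2 Pa0 Pb0 c j := by
  induction j with
  | zero => rw [Nat.le_zero.1 h]
  | succ j ih =>
    rcases Nat.lt_or_ge i (j+1) with h' | h'
    · exact (ih (by omega)).trans (by rw [sel_succ]; exact subset_updOp _ _)
    · have : i = j + 1 := by omega
      rw [this]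

lemma mem_updOp {v : V} {Pc Pnc : Finset V} :
    v ∈ updOp G f1 f2 Pc Pnc ↔ v ∈ Pc ∨
      (v ∉ Pc ∧ v ∉ Pnc ∧ f1 v ≤ nbrCount G Pc v) ∨ (v ∈ Pnc ∧ f2 v ≤ nbrCount G Pc v) := by
  simp [updOp]

lemma exists_new_nbr {P P' : Finset V} {v : V} (hsub : P ⊆ P')
    (h : nbrCount G P v < nbrCount G P' v) : ∃ u, u ∈ P' ∧ u ∉ P ∧ G.Adj v u := by
  by_contra hcon
  push_neg at hcon
  have hsub2 : P'.filter (fun u => G.Adj v u) ⊆ P.filter (fun u => G.Adj v u) := by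
    intro u hu
    rw [Finset.mem_filter] at hu ⊢
    refine ⟨?_, hu.2⟩
    by_contra hP
    exact hcon u hu.1 hP hu.2
  have := Finset.card_le_card hsub2
  rw [nbrCount, nbrCount] at h
  omega

lemma backward {i : ℕ} (hi : 1 ≤ i) {v : V} {c : Bool}
    (hmem : v ∈ procSel G f1 f2 Pa0 Pb0 c (i + 1))
    (hold : v ∉ procSel G f1 f2 Pa0 Pb0 c i) :
    ∃ u c', u ∈ procSel G f1 f2 Pa0 Pb0 c' i ∧ u ∉ procSel G f1 f2 Pa0 Pb0 c' (i - 1) ∧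
      (u = v ∨ G.Adj u v) := by
  have hij : i = (i - 1) + 1 := by omega
  rw [sel_succ] at hmem
  rcases mem_updOp.1 hmem with h | ⟨h1, h2, h3⟩ | ⟨h1, h2⟩
  · exact absurd h hold
  · have hcj : v ∉ procSel G f1 f2 Pa0 Pb0 c (i - 1) :=
      fun h => hold (sel_mono c (by omega) h)
    have hnj : v ∉ procSel G f1 f2 Pa0 Pb0 (!c) (i - 1) :=
      fun h => h2 (sel_mono (!c) (by omega) h)
    have hlt : nbrCount G (procSel G f1 f2 Pa0 Pb0 c (i - 1)) v < f1 v := by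
      by_contra hle
      push_neg at hle
      exact hold (by rw [hij, sel_succ]; exact mem_updOp.2 (Or.inr (Or.inl ⟨hcj, hnj, hle⟩)))
    obtain ⟨u, hu1, hu2, hu3⟩ :=
      exists_new_nbr (sel_mono c (by omega : i - 1 ≤ i)) (lt_of_lt_of_le hlt h3)
    exact ⟨u, c, hu1, hu2, Or.inr hu3.symm⟩
  · by_cases hb : v ∈ procSel G f1 f2 Pa0 Pb0 (!c) (i - 1)
    · have hlt : nbrCount G (procSel G f1 f2 Pa0 Pb0 c (i - 1)) v < f2 v := by
        by_contra hle
        push_neg at hle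
        exact hold (by rw [hij, sel_succ]; exact mem_updOp.2 (Or.inr (Or.inr ⟨hb, hle⟩)))
      obtain ⟨u, hu1, hu2, hu3⟩ :=
        exists_new_nbr (sel_mono c (by omega : i - 1 ≤ i)) (lt_of_lt_of_le hlt h2)
      exact ⟨u, c, hu1, hu2, Or.inr hu3.symm⟩
    · exact ⟨v, !c, h1, hb, Or.inl rfl⟩

lemma chain_exists [DecidableEq V] {t : ℕ} (ht : 1 ≤ t) {v : V} {c : Bool}
    (hv : v ∈ procSel G f1 f2 Pa0 Pb0 c t) (hv' : v ∉ procSel G f1 f2 Pa0 Pb0 c (t - 1)) :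
    ∃ (w : ℕ → V) (cc : ℕ → Bool), w t = v ∧
      (∀ i, 1 ≤ i → i ≤ t →
        w i ∈ procSel G f1 f2 Pa0 Pb0 (cc i) i ∧ w i ∉ procSel G f1 f2 Pa0 Pb0 (cc i) (i - 1)) ∧
      (∀ i, 1 ≤ i → i < t → w i = w (i + 1) ∨ G.Adj (w i) (w (i + 1))) := by
  set S := procSel G f1 f2 Pa0 Pb0 with hS
  have key : ∀ d : ℕ, d < t → ∃ (w : ℕ → V) (cc : ℕ → Bool), w t = v ∧
      (∀ i, t - d ≤ i → i ≤ t → w i ∈ S (cc i) i ∧ w i ∉ S (cc i) (i - 1)) ∧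
      (∀ i, t - d ≤ i → i < t → w i = w (i + 1) ∨ G.Adj (w i) (w (i + 1))) := by
    intro d
    induction d with
    | zero =>
      intro _
      refine ⟨fun _ => v, fun _ => c, rfl, ?_, ?_⟩
      · intro i h1 h2
        have : i = t := by omega
        subst this
        exact ⟨hv, hv'⟩
      · intro i h1 h2
        omega
    | succ d ih =>
      intro hd
      obtain ⟨w, cc, hwt, hprop, hlink⟩ := ih (by omega)
      set m := t - (d + 1) with hm
      have hm1 : 1 ≤ m := by omega
      have hmt : m < t := by omega
      have hmd : t - d = m + 1 := by omega
      have hmem : w (m + 1) ∈ S (cc (m + 1)) (m + 1) ∧ w (m + 1) ∉ S (cc (m + 1)) m := by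
        have := hprop (m + 1) (by omega) (by omega)
        simpa using this
      obtain ⟨u, c', hu1, hu2, hu3⟩ := backward hm1 hmem.1 hmem.2
      refine ⟨Function.update w m u, Function.update cc m c', ?_, ?_, ?_⟩
      · rw [Function.update_of_ne (by omega : t ≠ m)]
        exact hwt
      · intro i h1 h2
        rcases eq_or_ne i m with rfl | hne
        · rw [Function.update_self, Function.update_self]
          exact ⟨hu1, hu2⟩
        · rw [Function.update_of_ne hne, Function.update_of_ne hne]
          exact hprop i (by omega) h2
      · intro i h1 h2
        rcases eq_or_ne i m with rfl | hne
        · rw [Function.update_self, Function.update_of_ne (by omega : m + 1 ≠ m)]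
          exact hu3
        · rw [Function.update_of_ne hne, Function.update_of_ne (by omega : i + 1 ≠ m)]
          exact hlink i (by omega) h2
  obtain ⟨w, cc, hwt, hprop, hlink⟩ := key (t - 1) (by omega)
  exact ⟨w, cc, hwt, fun i h1 h2 => hprop i (by omega) h2, fun i h1 h2 => hlink i (by omega) h2⟩

end Proc

lemma count_map_range {V : Type*} [DecidableEq V] (f : ℕ → V) (v : V) : ∀ n : ℕ,
    (List.count v ((List.range n).map f)) = ((Finset.range n).filter (fun j => f j = v)).card := by
  intro n
  induction n with
  | zero => simp
  | succ n ih =>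
    rw [List.range_succ, List.map_append, List.count_append, ih, Finset.range_add_one,
      Finset.filter_insert]
    by_cases h : f n = v
    · rw [if_pos h, Finset.card_insert_of_notMem (by simp)]
      simp [List.count_cons, h]
    · rw [if_neg h]
      simp [List.count_cons, h]
section Final
variable {V : Type*} [Fintype V] [DecidableEq V] {G : SimpleGraph V} {f1 f2 : V → ℕ} {Pa0 Pb0 : Finset V}

lemma sel_true (i : ℕ) : procSel G f1 f2 Pa0 Pb0 true i = (proc2 G f1 f2 Pa0 Pb0 i).1 := by
  simp [procSel]

lemma sel_false (i : ℕ) : procSel G f1 f2 Pa0 Pb0 false i = (proc2 G f1 f2 Pa0 Pb0 i).2 := by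
  simp [procSel]

lemma sel_sub_union (c : Bool) (j : ℕ) :
    procSel G f1 f2 Pa0 Pb0 c j ⊆ (proc2 G f1 f2 Pa0 Pb0 j).1 ∪ (proc2 G f1 f2 Pa0 Pb0 j).2 := by
  cases c
  · rw [sel_false]; exact Finset.subset_union_right
  · rw [sel_true]; exact Finset.subset_union_left

end Final

/-- If for some initial sets the two-opinion activation process in `G` takes at least
`t ≥ 1` rounds (i.e. `P_a^t ∪ P_b^t ≠ P_a^{t-1} ∪ P_b^{t-1}`), then
`td(G) ≥ log_3(t+2)`. -/
theorem rounds_treedepth_bound {V : Type*} [Fintype V] [DecidableEq V]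
    (G : SimpleGraph V) (f1 f2 : V → ℕ) (Pa0 Pb0 : Finset V) (t : ℕ) (ht : 1 ≤ t)
    (hne : (proc2 G f1 f2 Pa0 Pb0 t).1 ∪ (proc2 G f1 f2 Pa0 Pb0 t).2
        ≠ (proc2 G f1 f2 Pa0 Pb0 (t - 1)).1 ∪ (proc2 G f1 f2 Pa0 Pb0 (t - 1)).2) :
    Real.logb 3 ((t : ℝ) + 2) ≤ (treedepth G : ℝ) := by
  -- extract a vertex newly entering the union at time t
  have htt : t = (t - 1) + 1 := by omega
  have hUsub : (proc2 G f1 f2 Pa0 Pb0 (t-1)).1 ∪ (proc2 G f1 f2 Pa0 Pb0 (t-1)).2 ⊆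
      (proc2 G f1 f2 Pa0 Pb0 t).1 ∪ (proc2 G f1 f2 Pa0 Pb0 t).2 := by
    intro y hy
    rcases Finset.mem_union.1 hy with hy | hy
    · refine Finset.mem_union_left _ ?_
      rw [← sel_true] at hy ⊢
      exact sel_mono true (Nat.sub_le t 1) hy
    · refine Finset.mem_union_right _ ?_
      rw [← sel_false] at hy ⊢
      exact sel_mono false (Nat.sub_le t 1) hy
  obtain ⟨x, hxU, hxU'⟩ := Finset.exists_of_ssubset (lt_of_le_of_ne hUsub (Ne.symm hne))
  obtain ⟨c, hc⟩ : ∃ c : Bool, x ∈ procSel G f1 f2 Pa0 Pb0 c t := by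
    rcases Finset.mem_union.1 hxU with h | h
    · exact ⟨true, by rw [sel_true]; exact h⟩
    · exact ⟨false, by rw [sel_false]; exact h⟩
  have hc' : x ∉ procSel G f1 f2 Pa0 Pb0 c (t-1) := fun h => hxU' (sel_sub_union c (t-1) h)
  obtain ⟨w, cc, hwt, hprop, hlink⟩ := chain_exists ht hc hc'
  -- no other chain element equals w t
  have hlast : ∀ i, 1 ≤ i → i < t → w i ≠ w t := by
    intro i h1 h2 heq
    have hwi : w i ∈ procSel G f1 f2 Pa0 Pb0 (cc i) i := (hprop i h1 (le_of_lt h2)).1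
    have hwi' : w i ∈ procSel G f1 f2 Pa0 Pb0 (cc i) (t-1) := sel_mono _ (by omega) hwi
    apply hxU'
    have : w i ∈ (proc2 G f1 f2 Pa0 Pb0 (t-1)).1 ∪ (proc2 G f1 f2 Pa0 Pb0 (t-1)).2 :=
      sel_sub_union _ _ hwi'
    rwa [heq, hwt] at this
  -- equal chain vertices carry distinct opinions
  have hpair : ∀ i j, 1 ≤ i → i < j → j ≤ t → w i = w j → cc i ≠ cc j := by
    intro i j h1 h2 h3 he hccc
    have hwi : w i ∈ procSel G f1 f2 Pa0 Pb0 (cc i) i := (hprop i h1 (by omega)).1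
    have hwj : w j ∉ procSel G f1 f2 Pa0 Pb0 (cc j) (j-1) := (hprop j (by omega) h3).2
    apply hwj
    rw [← he, ← hccc]
    exact sel_mono _ (by omega) hwi
  have hpair' : ∀ i j, 1 ≤ i → 1 ≤ j → i ≤ t → j ≤ t → i ≠ j → w i = w j → cc i ≠ cc j := by
    intro i j h1 h2 h3 h4 h5 he
    rcases h5.lt_or_gt with h | h
    · exact hpair i j h1 h h4 he
    · exact (hpair j i h2 h h3 he.symm).symm
  -- the walk list
  set u : ℕ → V := fun j => w (min (j+1) t) with hu
  set l : List V := (List.range (t+1)).map u with hl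
  have hlen : l.length = t + 1 := by simp [hl]
  have hmem : ∀ y ∈ l, y ∈ (Finset.univ : Finset V) := fun _ _ => Finset.mem_univ _
  have hch : l.Chain' (stepRel G Finset.univ) := by
    rw [hl]
    unfold List.Chain'
    rw [List.isChain_map, show t + 1 = Nat.succ t from rfl, List.isChain_range_succ]
    intro m hm
    have hum : u m = w (m+1) := by rw [hu]; simp; congr 1; omega
    rcases eq_or_lt_of_le (Nat.succ_le_of_lt hm) with h' | h'
    · have hum1 : u (m+1) = w t := by rw [hu]; simp; congr 1; omega
      rw [hum, hum1]
      exact Or.inl (by rw [show m + 1 = t from h'])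
    · have hum1 : u (m+1) = w (m+2) := by rw [hu]; simp; congr 1; omega
      rw [hum, hum1]
      exact (hlink (m+1) (by omega) h').imp id
        (fun a => ⟨Finset.mem_univ _, Finset.mem_univ _, a⟩)
  have hcnt : ∀ v, l.count v ≤ 2 := by
    intro v
    rw [hl, count_map_range]
    by_contra hgt
    push_neg at hgt
    obtain ⟨a, b, e, ha, hb, he, hab, hae, hbe⟩ := Finset.two_lt_card_iff.1 hgt
    simp only [Finset.mem_filter, Finset.mem_range] at ha hb he
    have hwa : w (min (a+1) t) = v := ha.2
    have hwb : w (min (b+1) t) = v := hb.2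
    have hwe : w (min (e+1) t) = v := he.2
    by_cases hv : w t = v
    · have hsome : min (a+1) t < t ∨ min (b+1) t < t ∨ min (e+1) t < t := by omega
      rcases hsome with h | h | h
      · exact hlast _ (by omega) h (by rw [hwa, hv])
      · exact hlast _ (by omega) h (by rw [hwb, hv])
      · exact hlast _ (by omega) h (by rw [hwe, hv])
    · have hma : min (a+1) t = a + 1 ∧ a + 1 < t := by
        rcases Nat.lt_or_ge (a+1) t with h | h
        · exact ⟨by omega, h⟩
        · exact absurd (by rw [← hwa]; congr 1; omega) hv
      have hmb : min (b+1) t = b + 1 ∧ b + 1 < t := by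
        rcases Nat.lt_or_ge (b+1) t with h | h
        · exact ⟨by omega, h⟩
        · exact absurd (by rw [← hwb]; congr 1; omega) hv
      have hme : min (e+1) t = e + 1 ∧ e + 1 < t := by
        rcases Nat.lt_or_ge (e+1) t with h | h
        · exact ⟨by omega, h⟩
        · exact absurd (by rw [← hwe]; congr 1; omega) hv
      rw [hma.1] at hwa
      rw [hmb.1] at hwb
      rw [hme.1] at hwe
      have d1 : cc (a+1) ≠ cc (b+1) :=
        hpair' _ _ (by omega) (by omega) (by omega) (by omega) (by omega)
          (by rw [hwa, hwb])
      have d2 : cc (a+1) ≠ cc (e+1) :=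
        hpair' _ _ (by omega) (by omega) (by omega) (by omega) (by omega)
          (by rw [hwa, hwe])
      have d3 : cc (b+1) ≠ cc (e+1) :=
        hpair' _ _ (by omega) (by omega) (by omega) (by omega) (by omega)
          (by rw [hwb, hwe])
      rcases Bool.eq_false_or_eq_true (cc (a+1)) with hB1 | hB1 <;>
      rcases Bool.eq_false_or_eq_true (cc (b+1)) with hB2 | hB2 <;>
      rcases Bool.eq_false_or_eq_true (cc (e+1)) with hB3 | hB3 <;>
      first
        | exact d1 (hB1.trans hB2.symm)
        | exact d2 (hB1.trans hB3.symm)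
        | exact d3 (hB2.trans hB3.symm)
  have hfin : t + 2 ≤ 3 ^ treedepth G := by
    have := walk_bound G (Finset.univ : Finset V).card Finset.univ le_rfl l hmem hch hcnt
    rw [hlen] at this
    exact this
  have h3 : ((t : ℝ) + 2) ≤ (3 : ℝ) ^ (treedepth G) := by
    have : ((t + 2 : ℕ) : ℝ) ≤ ((3 ^ treedepth G : ℕ) : ℝ) := Nat.cast_le.2 hfin
    push_cast at this
    linarith
  have hlog := Real.logb_le_logb_of_le (by norm_num : (1:ℝ) < 3) (by positivity) h3
  rw [Real.logb_pow, Real.logb_self_eq_one (by norm_num)] at hlog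
  simpa using hlog
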